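/- In OΓ_n^{(1,r)}, the eccentricity of the all-zero vertex 0^n equals ⌈nr/(r+1)⌉. -/

import Mathlib

/-- Hamming distance between two binary words (as lists). -/
def hdist (u v : List Bool) : ℕ := (List.zipWith bne u v).count true

/-- `w` is an I-Fibonacci (p,r)-code: no factor `1^(r+1)` and no factor `1 0^s 1` with `s < p`
(equivalently: maximal blocks of 1s have length ≤ r and blocks of 1s are separated by ≥ p zeros). -/
def ICode (p r : ℕ) (w : List Bool) : Prop :=
  ¬ (List.replicate (r + 1) true <:+: w) ∧
  ∀ s < p, ¬ ((true :: (List.replicate s false ++ [true])) <:+: w)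

/-- `w` is an O-Fibonacci (p,r)-code: no factor `(10^(p-1))^r 1` and no factor `1 0^s 1`
with `s ≤ p - 2`. -/
def OCode (p r : ℕ) (w : List Bool) : Prop :=
  ¬ (((List.replicate r (true :: List.replicate (p - 1) false)).flatten ++ [true]) <:+: w) ∧
  ∀ s, s + 2 ≤ p → ¬ ((true :: (List.replicate s false ++ [true])) <:+: w)

/-- Vertex type of the I-Fibonacci (p,r)-cube of dimension n. -/
def IVert (p r n : ℕ) := {w : List Bool // w.length = n ∧ ICode p r w}

/-- Vertex type of the O-Fibonacci (p,r)-cube of dimension n. -/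
def OVert (p r n : ℕ) := {w : List Bool // w.length = n ∧ OCode p r w}

/-- The I-Fibonacci (p,r)-cube: vertices adjacent iff they differ in exactly one coordinate. -/
def IGraph (p r n : ℕ) : SimpleGraph (IVert p r n) :=
  SimpleGraph.fromRel (fun u v => hdist u.1 v.1 = 1)

/-- The O-Fibonacci (p,r)-cube. -/
def OGraph (p r n : ℕ) : SimpleGraph (OVert p r n) :=
  SimpleGraph.fromRel (fun u v => hdist u.1 v.1 = 1)

/-- Eccentricity of a vertex. -/
noncomputable def ecc {V : Type*} (G : SimpleGraph V) (v : V) : ℕ :=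
  sSup {d | ∃ u, G.dist v u = d}

/-- Radius of a graph. -/
noncomputable def grad {V : Type*} (G : SimpleGraph V) : ℕ :=
  sInf {e | ∃ v, ecc G v = e}

/-- Diameter of a graph. -/
noncomputable def gdiam {V : Type*} (G : SimpleGraph V) : ℕ :=
  sSup {d | ∃ u v, G.dist u v = d}

/-- Degree of a vertex (number of neighbours). -/
noncomputable def deg {V : Type*} (G : SimpleGraph V) (v : V) : ℕ :=
  {u | G.Adj v u}.ncard

lemma hdist_self (l : List Bool) : hdist l l = 0 := by
  induction l with
  | nil => rfl
  | cons x t ih =>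
    unfold hdist at ih ⊢
    simp only [List.zipWith_cons_cons, List.count_cons, ih]
    simp

lemma hdist_comm (u v : List Bool) : hdist u v = hdist v u := by
  unfold hdist
  rw [List.zipWith_comm_of_comm]
  intro x y; cases x <;> cases y <;> rfl

lemma hdist_triangle (a b c : List Bool) (h1 : a.length = b.length)
    (h2 : b.length = c.length) : hdist a c ≤ hdist a b + hdist b c := by
  induction a generalizing b c with
  | nil => simp [hdist]
  | cons x a ih =>
    cases b with
    | nil => simp at h1
    | cons y b =>
      cases c with
      | nil => simp at h2
      | cons z c =>
        have H := ih b c (by simpa using h1) (by simpa using h2)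
        unfold hdist at H ⊢
        simp only [List.zipWith_cons_cons, List.count_cons]
        cases x <;> cases y <;> cases z <;> simp <;> omega

lemma zip_repl (l : List Bool) : List.zipWith bne (List.replicate l.length false) l = l := by
  induction l with
  | nil => rfl
  | cons x t ih =>
    simp only [List.length_cons, List.replicate_succ, List.zipWith_cons_cons, ih]
    cases x <;> rfl

lemma hdist_repl_false (l : List Bool) (n : ℕ) (h : l.length = n) :
    hdist (List.replicate n false) l = l.count true := by
  unfold hdist; rw [← h, zip_repl]

lemma hdist_flip (a b : List Bool) : hdist (a ++ true :: b) (a ++ false :: b) = 1 := by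
  unfold hdist
  rw [List.zipWith_append (l₁ := a) (l₂ := a) rfl, List.zipWith_cons_cons]
  have ha := hdist_self a
  have hb := hdist_self b
  unfold hdist at ha hb
  simp [List.count_append, List.count_cons, List.count_replicate, ha, hb]

lemma infix_split {t a b : List Bool} {x : Bool} (h : t <:+: a ++ x :: b) :
    t <:+: a ∨ t <:+: x :: b ∨ x ∈ t := by
  induction a with
  | nil => exact Or.inr (Or.inl h)
  | cons c a ih =>
    rw [List.cons_append, List.infix_cons_iff] at h
    rcases h with h | h
    · by_cases hl : t.length ≤ a.length + 1
      · left
        have hpre : t <+: (c :: a) :=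
          List.prefix_of_prefix_length_le h (List.prefix_append _ _) (by simpa using hl)
        exact hpre.isInfix
      · right; right
        obtain ⟨s, hs⟩ := h
        have hlt : a.length + 1 < t.length := by omega
        have hx : (c :: (a ++ x :: b))[a.length + 1]'(by simp) = x := by
          rw [List.getElem_cons_succ, List.getElem_append_right (Nat.le_refl _)]
          simp
        have hx2 : t[a.length+1]'hlt = x := by
          calc t[a.length+1]'hlt
              = (t ++ s)[a.length+1]'(by rw [hs]; simp) :=
                (List.getElem_append_left hlt).symm
            _ = (c :: (a ++ x :: b))[a.length+1]'(by simp) := by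
                congr 1 <;> try rw [hs]
            _ = x := hx
        exact hx2 ▸ List.getElem_mem _
    · rcases ih h with h' | h' | h'
      · exact Or.inl (h'.trans (List.infix_cons (List.infix_refl a)))
      · exact Or.inr (Or.inl h')
      · exact Or.inr (Or.inr h')


lemma flat_eq (r : ℕ) :
    (List.replicate r (true :: List.replicate 0 false)).flatten ++ [true]
      = List.replicate (r+1) true := by
  induction r with
  | zero => rfl
  | succ k ih =>
    rw [List.replicate_succ, List.flatten_cons]
    simp only [List.replicate_zero, List.cons_append, List.nil_append] at *
    rw [ih, ← List.replicate_succ]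

lemma OCode_one (r : ℕ) (w : List Bool) :
    OCode 1 r w ↔ ¬ (List.replicate (r+1) true <:+: w) := by
  constructor
  · rintro ⟨h1, -⟩; rwa [flat_eq] at h1
  · intro h
    refine ⟨by rwa [flat_eq], ?_⟩
    intro s hs
    exact absurd hs (by omega)
lemma count_bound (r : ℕ) (w : List Bool) (h : ¬ (List.replicate (r+1) true <:+: w)) :
    (r+1) * w.count true ≤ r * (w.length + 1) := by
  by_cases hw0 : w = []
  · subst hw0; simp
  set k := (w.takeWhile (fun b => b)).length with hk
  have hdecomp : w.takeWhile (fun b => b) ++ w.dropWhile (fun b => b) = w :=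
    List.takeWhile_append_dropWhile
  have hrep : w.takeWhile (fun b => b) = List.replicate k true := by
    rw [List.eq_replicate_iff]
    refine ⟨rfl, fun b hb => by simpa using List.mem_takeWhile_imp hb⟩
  have hkr : k ≤ r := by
    by_contra hkr
    apply h
    have h1 : List.replicate (r+1) true <+: List.replicate k true :=
      ⟨List.replicate (k - (r+1)) true, by rw [← List.replicate_add]; congr 1; omega⟩
    have h2 : List.replicate k true <+: w := hrep ▸ List.takeWhile_prefix _
    exact (h1.trans h2).isInfix
  cases hd : w.dropWhile (fun b => b) with
  | nil =>
    have hw : w = List.replicate k true := by rw [← hdecomp, hd, List.append_nil, hrep]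
    rw [hw]
    simp only [List.count_replicate, List.length_replicate, if_pos rfl]
    calc (r+1)*k = r*k + k := by ring
      _ ≤ r*k + r := by omega
      _ = r*(k+1) := by ring
  | cons x rest =>
    have hx : x = false := by
      have h0 := List.head_dropWhile_not (fun b => b) (l := w) (by rw [hd]; simp)
      simp only [hd, List.head_cons] at h0; exact h0
    subst hx
    have hrest_inf : rest <:+: w := by
      have h1 : (false :: rest) <:+ w := hd ▸ List.dropWhile_suffix _
      exact ((List.suffix_cons _ _).trans h1).isInfix
    have hrest_avoid : ¬ (List.replicate (r+1) true <:+: rest) :=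
      fun hc => h (hc.trans hrest_inf)
    have hlen : rest.length < w.length := by
      conv_rhs => rw [← hdecomp, hd]
      simp only [List.length_append, List.length_cons]
      omega
    have ihr := count_bound r rest hrest_avoid
    have hcount : w.count true = k + rest.count true := by
      conv_lhs => rw [← hdecomp, hd, hrep]
      simp [List.count_append, List.count_replicate, List.count_cons]
    have hlen2 : w.length = k + rest.length + 1 := by
      conv_lhs => rw [← hdecomp, hd, hrep]
      simp
      omega
    rw [hcount, hlen2]
    calc (r+1) * (k + rest.count true) = (r+1)*k + (r+1)*rest.count true := by ring
      _ ≤ (r*k + k) + r*(rest.length+1) := by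
          have e : (r+1)*k = r*k+k := by ring
          omega
      _ ≤ (r*k + r) + r*(rest.length+1) := by omega
      _ = r*(k + rest.length + 1 + 1) := by ring
termination_by w.length
decreasing_by exact hlen

def pat (r n : ℕ) : List Bool :=
  if h : n ≤ r then List.replicate n true
  else List.replicate r true ++ false :: pat r (n - (r+1))
termination_by n
decreasing_by omega

lemma pat_length (r n : ℕ) : (pat r n).length = n := by
  rw [pat]
  split
  · simp
  · rename_i h
    simp [pat_length r (n - (r+1))]
    omega
termination_by n
decreasing_by omega


lemma pat_avoid (r n : ℕ) : ¬ (List.replicate (r+1) true <:+: pat r n) := by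
  rw [pat]
  split
  · rename_i h
    intro hc
    have := hc.length_le
    simp only [List.length_replicate] at this
    omega
  · rename_i h
    intro hc
    rcases infix_split hc with h1 | h1 | h1
    · have h2 := h1.sublist.count_le true
      simp [List.count_replicate] at h2
    · rw [List.infix_cons_iff] at h1
      rcases h1 with h1 | h1
      · obtain ⟨s, hs⟩ := h1
        rw [List.replicate_succ] at hs
        simp at hs
      · exact pat_avoid r (n - (r+1)) h1
    · simp [List.mem_replicate] at h1
termination_by n
decreasing_by omega

lemma pat_count (r n : ℕ) (hr : 1 ≤ r) : (pat r n).count true = (n*r + r)/(r+1) := by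
  rw [pat]
  split
  · rename_i h
    simp only [List.count_replicate, if_pos rfl]
    have e : n*r + r = (r+1)*n + (r-n) := by
      obtain ⟨d, hd⟩ := Nat.exists_eq_add_of_le h
      subst hd
      simp only [Nat.add_sub_cancel_left]
      ring
    rw [e, Nat.mul_add_div (by omega), Nat.div_eq_of_lt (by omega)]
    simp
  · rename_i h
    have ih := pat_count r (n - (r+1)) hr
    simp only [List.count_append, List.count_replicate, List.count_cons, if_pos rfl, ih]
    set m := n - (r+1) with hm
    have hn : n = m + (r+1) := by omega
    have e : (m + (r+1))*r + r = (m*r + r) + (r+1)*r := by ring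
    rw [hn, e, Nat.add_mul_div_left _ _ (show 0 < r+1 by omega)]
    simp
    omega
termination_by n
decreasing_by omega


-- ### graph part
lemma adj_hdist {r n : ℕ} {u w : OVert 1 r n} (h : (OGraph 1 r n).Adj u w) :
    hdist u.1 w.1 = 1 := by
  rw [OGraph, SimpleGraph.fromRel_adj] at h
  rcases h.2 with h' | h'
  · exact h'
  · rw [hdist_comm]; exact h'

lemma walk_le {r n : ℕ} {u w : OVert 1 r n} (p : (OGraph 1 r n).Walk u w) :
    hdist u.1 w.1 ≤ p.length := by
  induction p with
  | nil => simp [hdist_self]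
  | @cons a b c h p ih =>
    have tri := hdist_triangle a.1 b.1 c.1 (by rw [a.2.1, b.2.1]) (by rw [b.2.1, c.2.1])
    rw [adj_hdist h] at tri
    simp only [SimpleGraph.Walk.length_cons]
    omega

lemma flip_first {r n : ℕ} (u : OVert 1 r n) (hu : true ∈ u.1) :
    ∃ w : OVert 1 r n, (OGraph 1 r n).Adj u w ∧ w.1.count true + 1 = u.1.count true := by
  classical
  set a := u.1.takeWhile (fun b => !b) with ha
  set d := u.1.dropWhile (fun b => !b) with hd
  have hdecomp : a ++ d = u.1 := List.takeWhile_append_dropWhile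
  have hdne : d ≠ [] := by
    intro hnil
    have : ∀ x ∈ u.1, x = false := by
      intro x hx
      rw [← hdecomp, hnil, List.append_nil] at hx
      have := List.mem_takeWhile_imp hx
      simpa using this
    have := this true hu
    simp at this
  obtain ⟨x, b, hxb⟩ : ∃ x b, d = x :: b := by
    cases hdd : d with
    | nil => exact absurd hdd hdne
    | cons x b => exact ⟨x, b, rfl⟩
  have hx : x = true := by
    have e : List.dropWhile (fun b => !b) u.1 = x :: b := by rw [← hd, hxb]
    have h0 := List.head_dropWhile_not (fun b => !b) (l := u.1) (by rw [e]; simp)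
    simp only [e, List.head_cons] at h0
    simpa using h0
  subst hx
  have ha0 : a.count true = 0 := by
    rw [List.count_eq_zero]
    intro hmem
    have := List.mem_takeWhile_imp hmem
    simp at this
  have hu1 : u.1 = a ++ true :: b := by rw [← hdecomp, hxb]
  -- the flipped word
  have huavoid : ¬ (List.replicate (r+1) true <:+: u.1) := (OCode_one r u.1).mp u.2.2
  have hwavoid : ¬ (List.replicate (r+1) true <:+: (a ++ false :: b)) := by
    intro hc
    rcases infix_split hc with h1 | h1 | h1
    · have h2 := h1.sublist.count_le true
      rw [ha0] at h2
      simp [List.count_replicate] at h2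
    · rw [List.infix_cons_iff] at h1
      rcases h1 with h1 | h1
      · obtain ⟨s, hs⟩ := h1
        rw [List.replicate_succ] at hs
        simp at hs
      · apply huavoid
        apply h1.trans
        rw [hu1]
        exact ((List.suffix_cons _ _).trans (List.suffix_append _ _)).isInfix
    · simp [List.mem_replicate] at h1
  have hwlen : (a ++ false :: b).length = n := by
    have := u.2.1
    rw [hu1] at this
    simpa using this
  refine ⟨⟨a ++ false :: b, hwlen, (OCode_one r _).mpr hwavoid⟩, ?_, ?_⟩
  · simp only [OGraph, SimpleGraph.fromRel_adj]
    constructor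
    · intro he
      have := congrArg (fun z : OVert 1 r n => z.1.count true) he
      simp only [hu1] at this
      simp [List.count_append, List.count_cons] at this
    · left
      show hdist u.1 (a ++ false :: b) = 1
      rw [hu1]
      exact hdist_flip a b
  · rw [hu1]
    simp [List.count_append, List.count_cons]
    omega

lemma walk_exists {r n : ℕ} (v : OVert 1 r n) (hv : v.1 = List.replicate n false)
    (u : OVert 1 r n) : ∃ p : (OGraph 1 r n).Walk u v, p.length = u.1.count true := by
  generalize hc : u.1.count true = c
  induction c generalizing u with
  | zero =>
    have huv : u = v := by
      apply Subtype.ext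
      rw [hv]
      rw [List.eq_replicate_iff]
      refine ⟨u.2.1, ?_⟩
      intro x hx
      cases hxx : x
      · rfl
      · exfalso
        rw [List.count_eq_zero] at hc
        exact hc (hxx ▸ hx)
    subst huv
    exact ⟨SimpleGraph.Walk.nil, rfl⟩
  | succ c ih =>
    have hmem : true ∈ u.1 := by
      by_contra hm
      rw [List.count_eq_zero.mpr hm] at hc
      omega
    obtain ⟨w, hadj, hcount⟩ := flip_first u hmem
    obtain ⟨p, hp⟩ := ih w (by omega)
    exact ⟨SimpleGraph.Walk.cons hadj p, by simp [hp]⟩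

lemma dist_eq {r n : ℕ} (v : OVert 1 r n) (hv : v.1 = List.replicate n false)
    (u : OVert 1 r n) : (OGraph 1 r n).dist v u = u.1.count true := by
  obtain ⟨p, hp⟩ := walk_exists v hv u
  apply le_antisymm
  · rw [SimpleGraph.dist_comm]
    exact hp ▸ SimpleGraph.dist_le p
  · have hreach : (OGraph 1 r n).Reachable v u := (SimpleGraph.Walk.reachable p).symm
    obtain ⟨q, hq⟩ := hreach.exists_walk_length_eq_dist
    have := walk_le q
    rw [hv] at this
    rw [hdist_repl_false u.1 n u.2.1] at this
    omega


/-- in `OΓ_n^{(1,r)}` the eccentricity of `0^n` is `⌈nr/(r+1)⌉`. -/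
theorem OGraph_ecc_zero (r n : ℕ) (hr : 1 ≤ r) (hn : 1 ≤ n)
    (v : OVert 1 r n) (hv : v.1 = List.replicate n false) :
    ecc (OGraph 1 r n) v = (n * r + r) / (r + 1) := by
  have hM : ∀ u : OVert 1 r n, (OGraph 1 r n).dist v u = u.1.count true := dist_eq v hv
  have hub : ∀ d ∈ {d | ∃ u, (OGraph 1 r n).dist v u = d}, d ≤ (n * r + r) / (r + 1) := by
    rintro d ⟨u, rfl⟩
    rw [hM u, Nat.le_div_iff_mul_le (by omega)]
    have hb := count_bound r u.1 ((OCode_one r u.1).mp u.2.2)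
    calc u.1.count true * (r+1) = (r+1) * u.1.count true := by ring
      _ ≤ r * (u.1.length + 1) := hb
      _ = n * r + r := by rw [u.2.1]; ring
  have hmem : (n * r + r) / (r + 1) ∈ {d | ∃ u, (OGraph 1 r n).dist v u = d} := by
    refine ⟨⟨pat r n, pat_length r n, (OCode_one r _).mpr (pat_avoid r n)⟩, ?_⟩
    refine (hM _).trans ?_
    exact pat_count r n hr
  unfold ecc
  apply le_antisymm
  · exact csSup_le ⟨_, hmem⟩ hub
  · exact le_csSup ⟨_, hub⟩ hmem
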